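/- Let r : ℂ → ℂ be an entire function that takes real values on the real axis, let M ≥ 1 be an integer and N = 2M, and for z ≠ 0 set F_N(z) = r(z) + z^N·r(1/z). Let I(θ) = Im r(e^{iθ}), θ_j = π/(2M) + (π/M)·j, and let 𝓘_j = [θ_j, θ_{j+1}] ⊂ ℝ. If I(θ) ≠ 0 for all θ ∈ 𝓘_j, then there exists θ ∈ 𝓘_j with F_N(e^{iθ}) = 0. -/

import Mathlib

open Real Complex Topology Filter

lemma reflect_entire (r : ℂ → ℂ) (hr : Differentiable ℂ r)
    (hreal : ∀ x : ℝ, (r x).im = 0) (z : ℂ) :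
    r ((starRingEnd ℂ) z) = (starRingEnd ℂ) (r z) := by
  set s : ℂ → ℂ := fun w => (starRingEnd ℂ) (r ((starRingEnd ℂ) w)) with hs_def
  have key : ∀ w : ℂ, HasDerivAt s ((starRingEnd ℂ) (deriv r ((starRingEnd ℂ) w))) w := by
    intro w
    have h : HasDerivAt r (deriv r ((starRingEnd ℂ) w)) ((starRingEnd ℂ) w) :=
      (hr _).hasDerivAt
    rw [hasDerivAt_iff_tendsto_slope] at h ⊢
    have hc : Filter.Tendsto (fun z : ℂ => (starRingEnd ℂ) z) (𝓝[≠] w)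
        (𝓝[≠] ((starRingEnd ℂ) w)) := by
      rw [tendsto_nhdsWithin_iff]
      constructor
      · exact (Complex.continuous_conj.tendsto w).mono_left nhdsWithin_le_nhds
      · filter_upwards [self_mem_nhdsWithin] with x hx
        simp only [Set.mem_compl_iff, Set.mem_singleton_iff] at hx ⊢
        exact fun h => hx ((starRingEnd ℂ).injective h)
    have hsl : slope s w = fun z => (starRingEnd ℂ) (slope r ((starRingEnd ℂ) w) ((starRingEnd ℂ) z)) := by
      funext z
      simp only [slope_def_field, hs_def, map_div₀, map_sub, Complex.conj_conj]
    rw [hsl]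
    exact (Complex.continuous_conj.tendsto _).comp (h.comp hc)
  have hs : Differentiable ℂ s := fun w => (key w).differentiableAt
  have hreal' : ∀ x : ℝ, r (x : ℂ) = s (x : ℂ) := by
    intro x
    simp only [hs_def, Complex.conj_ofReal]
    exact (Complex.conj_eq_iff_im.mpr (hreal x)).symm
  have hfreq : ∃ᶠ z in 𝓝[≠] (0 : ℂ), r z = s z := by
    have T : Filter.Tendsto (fun x : ℝ => (x : ℂ)) (𝓝[≠] (0 : ℝ)) (𝓝[≠] (0 : ℂ)) := by
      rw [tendsto_nhdsWithin_iff]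
      constructor
      · simpa using (Complex.continuous_ofReal.tendsto 0).mono_left nhdsWithin_le_nhds
      · filter_upwards [self_mem_nhdsWithin] with x hx
        simpa using hx
    exact T.frequently ((Filter.Eventually.of_forall fun x => hreal' x).frequently)
  have heq : Set.EqOn r s Set.univ :=
    AnalyticOnNhd.eqOn_of_preconnected_of_frequently_eq
      (analyticOnNhd_univ_iff_differentiable.mpr hr) (analyticOnNhd_univ_iff_differentiable.mpr hs)
      isPreconnected_univ (Set.mem_univ 0) hfreq
  have := heq (Set.mem_univ ((starRingEnd ℂ) z))
  rw [this]
  simp [hs_def]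

/-- For an entire function `r` that is real on the real axis and `N = 2M`,
if `Im r(e^{iθ})` does not vanish on the interval `𝓘_j = [θ_j, θ_{j+1}]` with
`θ_j = π/(2M) + (π/M) j`, then `F_N(z) = r(z) + z^N r(1/z)` has a zero `e^{iθ}` with
`θ ∈ 𝓘_j`. -/
theorem F_has_zero_in_interval
    (r : ℂ → ℂ) (hr : Differentiable ℂ r)
    (hreal : ∀ x : ℝ, (r x).im = 0)
    (M : ℕ) (hM : 1 ≤ M) (j : ℤ)
    (hI : ∀ θ ∈ Set.Icc (π / (2 * M) + π / M * j) (π / (2 * M) + π / M * (j + 1)),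
      (r (Complex.exp ((θ : ℝ) * Complex.I))).im ≠ 0) :
    ∃ θ ∈ Set.Icc (π / (2 * M) + π / M * j) (π / (2 * M) + π / M * (j + 1)),
      r (Complex.exp ((θ : ℝ) * Complex.I))
        + (Complex.exp ((θ : ℝ) * Complex.I)) ^ (2 * M)
          * r ((Complex.exp ((θ : ℝ) * Complex.I))⁻¹) = 0 := by
  have hM0 : (M : ℝ) ≠ 0 := Nat.cast_ne_zero.mpr (by omega)
  set a : ℝ := π / (2 * M) + π / M * j with ha_def
  set b : ℝ := π / (2 * M) + π / M * (j + 1) with hb_def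
  have hab : a ≤ b := by
    have : (0:ℝ) < π / M := by positivity
    simp only [ha_def, hb_def]
    push_cast
    nlinarith
  -- B and g
  set B : ℝ → ℝ := fun θ => (r (Complex.exp ((θ : ℝ) * Complex.I))).im with hB_def
  set g : ℝ → ℝ := fun θ =>
    (Complex.exp (-((M : ℂ) * θ) * Complex.I) * r (Complex.exp ((θ : ℝ) * Complex.I))).re
    with hg_def
  have hBc : Continuous B := by
    apply Complex.continuous_im.comp
    exact hr.continuous.comp (Complex.continuous_exp.comp (by continuity))
  have hgc : Continuous g := by
    apply Complex.continuous_re.comp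
    apply Continuous.mul
    · exact Complex.continuous_exp.comp (by continuity)
    · exact hr.continuous.comp (Complex.continuous_exp.comp (by continuity))
  -- endpoint values of g
  have hMa : (M : ℝ) * a = π / 2 + π * j := by
    rw [ha_def]; field_simp
  have hMb : (M : ℝ) * b = π / 2 + π * (j + 1) := by
    rw [hb_def]; field_simp
  have hexpj : ∀ k : ℤ, Complex.exp (-(π / 2 + π * k : ℝ) * Complex.I)
      = -Complex.I * ((-1 : ℂ) ^ k) := by
    intro k
    have h1 : (-(π / 2 + π * k : ℝ) : ℂ) * Complex.I
        = -(π/2 * Complex.I) + (-k : ℤ) * (π * Complex.I) := by push_cast; ring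
    have h2 : Complex.exp ((π/2 : ℂ) * Complex.I) = Complex.I := by
      rw [Complex.exp_mul_I]
      simp [Complex.cos_pi_div_two, Complex.sin_pi_div_two]
    rw [h1, Complex.exp_add, Complex.exp_int_mul, Complex.exp_pi_mul_I, Complex.exp_neg, h2,
      Complex.inv_I]
    rw [zpow_neg, ← inv_zpow, inv_neg, inv_one]
  -- g at the grid points
  have hg_at : ∀ (θ : ℝ) (k : ℤ), (M : ℝ) * θ = π / 2 + π * k →
      g θ = ((-1 : ℝ) ^ k) * B θ := by
    intro θ k hk
    simp only [hg_def, hB_def]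
    rw [show -((M : ℂ) * (θ : ℝ)) * Complex.I
        = -((π / 2 + π * k : ℝ) : ℂ) * Complex.I by rw [← hk]; push_cast; ring]
    rw [hexpj k]
    have hcast : ((-1 : ℂ) ^ k) = (((-1 : ℝ) ^ k : ℝ) : ℂ) := by
      rw [Complex.ofReal_zpow]; norm_num
    have hre : ((-1 : ℂ) ^ k).re = (-1 : ℝ) ^ k := by rw [hcast, Complex.ofReal_re]
    have him : ((-1 : ℂ) ^ k).im = 0 := by rw [hcast, Complex.ofReal_im]
    simp [Complex.mul_re, Complex.mul_im, hre, him]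
  have hBa : B a ≠ 0 := hI a ⟨le_refl a, hab⟩
  have hBb : B b ≠ 0 := hI b ⟨hab, le_refl b⟩
  have hprod : 0 < B a * B b := by
    rcases lt_or_gt_of_ne hBa with h1 | h1 <;> rcases lt_or_gt_of_ne hBb with h2 | h2
    · exact mul_pos_of_neg_of_neg h1 h2
    · exfalso
      obtain ⟨θ, hθ, hBθ⟩ := intermediate_value_Icc hab hBc.continuousOn
        (Set.mem_Icc.mpr ⟨le_of_lt h1, le_of_lt h2⟩)
      exact hI θ hθ hBθ
    · exfalso
      obtain ⟨θ, hθ, hBθ⟩ := intermediate_value_Icc' hab hBc.continuousOn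
        (Set.mem_Icc.mpr ⟨le_of_lt h2, le_of_lt h1⟩)
      exact hI θ hθ hBθ
    · exact mul_pos h1 h2
  have hga : g a = ((-1 : ℝ) ^ j) * B a := hg_at a j hMa
  have hgb : g b = -(((-1 : ℝ) ^ j) * B b) := by
    rw [hg_at b (j + 1) (by push_cast; push_cast at hMb; linarith)]
    rw [zpow_add₀ (by norm_num : (-1 : ℝ) ≠ 0)]
    ring
  have heps : ((-1 : ℝ) ^ j) * ((-1 : ℝ) ^ j) = 1 := by
    rw [← zpow_add₀ (by norm_num : (-1 : ℝ) ≠ 0), show j + j = 2 * j by ring, zpow_mul]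
    norm_num
  have hgprod : g a * g b < 0 := by
    rw [hga, hgb]
    nlinarith [hprod, heps]
  -- find a zero of g
  have hzero : ∃ θ ∈ Set.Icc a b, g θ = 0 := by
    rcases mul_neg_iff.mp hgprod with ⟨h1, h2⟩ | ⟨h1, h2⟩
    · obtain ⟨θ, hθ, hgθ⟩ := intermediate_value_Icc' hab hgc.continuousOn
        (Set.mem_Icc.mpr ⟨le_of_lt h2, le_of_lt h1⟩)
      exact ⟨θ, hθ, hgθ⟩
    · obtain ⟨θ, hθ, hgθ⟩ := intermediate_value_Icc hab hgc.continuousOn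
        (Set.mem_Icc.mpr ⟨le_of_lt h1, le_of_lt h2⟩)
      exact ⟨θ, hθ, hgθ⟩
  obtain ⟨θ, hθ, hgθ⟩ := hzero
  refine ⟨θ, hθ, ?_⟩
  set u : ℂ := Complex.exp ((θ : ℝ) * Complex.I) with hu_def
  set E : ℂ := Complex.exp (((M : ℂ) * (θ : ℝ)) * Complex.I) with hE_def
  set w : ℂ := Complex.exp (-((M : ℂ) * (θ : ℝ)) * Complex.I) * r u with hw_def
  have hwre : w.re = 0 := hgθ
  have hkey := reflect_entire r hr hreal u
  have hu_inv : u⁻¹ = (starRingEnd ℂ) u := by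
    rw [hu_def, ← Complex.exp_neg, ← Complex.exp_conj]
    congr 1
    simp [Complex.conj_ofReal]
  have hr_inv : r u⁻¹ = (starRingEnd ℂ) (r u) := by rw [hu_inv]; exact hkey
  have e1 : E * Complex.exp (-((M : ℂ) * (θ : ℝ)) * Complex.I) = 1 := by
    rw [hE_def, ← Complex.exp_add]
    simp
  have e2 : E * E = u ^ (2 * M) := by
    rw [hE_def, hu_def, ← Complex.exp_add, ← Complex.exp_nat_mul]
    congr 1
    push_cast
    ring
  have e3 : (starRingEnd ℂ) w = E * (starRingEnd ℂ) (r u) := by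
    rw [hw_def, map_mul]
    congr 1
    rw [hE_def, ← Complex.exp_conj]
    congr 1
    simp [Complex.conj_ofReal]
  have hw0 : w + (starRingEnd ℂ) w = 0 := by
    rw [Complex.add_conj, hwre]
    simp
  have hfinal : r u + u ^ (2 * M) * r u⁻¹ = E * (w + (starRingEnd ℂ) w) := by
    rw [hr_inv, e3, hw_def]
    linear_combination (-(r u)) * e1 - ((starRingEnd ℂ) (r u)) * e2
  rw [hfinal, hw0, mul_zero]
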